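/- Let F = {n! : n ≥ 1} ⊆ ℝ with the metric induced from ℝ. Then every quasi-isometry φ : F → F is at finite sup-distance from the identity map; consequently the quasi-isometry group QI(F) is trivial. -/

import Mathlib

/-- `φ` is a `(l, c)`-quasi-isometric embedding. -/
def QIEmbedding {X Y : Type*} [MetricSpace X] [MetricSpace Y]
    (l c : ℝ) (φ : X → Y) : Prop :=
  ∀ x x' : X, (1 / l) * dist x x' - c ≤ dist (φ x) (φ x') ∧
    dist (φ x) (φ x') ≤ l * dist x x' + c

/-- `φ` is `K`-coarsely surjective. -/
def CoarselySurjective {X Y : Type*} [MetricSpace X] [MetricSpace Y]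
    (K : ℝ) (φ : X → Y) : Prop :=
  ∀ y : Y, ∃ x : X, dist y (φ x) ≤ K

/-- `φ` is a `(l, c)`-quasi-isometry: a `(l,c)`-quasi-isometric embedding
which is `c`-coarsely surjective (with `l ≥ 1`, `c ≥ 0`). -/
def IsQI {X Y : Type*} [MetricSpace X] [MetricSpace Y]
    (l c : ℝ) (φ : X → Y) : Prop :=
  1 ≤ l ∧ 0 ≤ c ∧ QIEmbedding l c φ ∧ CoarselySurjective c φ

/-- `φ` is a quasi-isometry (for some constants). -/
def IsQuasiIsometry {X Y : Type*} [MetricSpace X] [MetricSpace Y]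
    (φ : X → Y) : Prop :=
  ∃ l c : ℝ, IsQI l c φ

/-- The set of factorials `{n! : n ≥ 1}` as a subset of `ℝ`, with the induced
metric. -/
def Fac : Set ℝ := {x : ℝ | ∃ n : ℕ, 1 ≤ n ∧ x = Nat.factorial n}

lemma Fac.one_le (x : Fac) : (1:ℝ) ≤ (x:ℝ) := by
  obtain ⟨n, hn, hx⟩ := x.2
  rw [hx]
  exact_mod_cast Nat.one_le_iff_ne_zero.mpr (Nat.factorial_ne_zero n)

lemma fac_mem {n : ℕ} (hn : 1 ≤ n) : ((n.factorial : ℕ) : ℝ) ∈ Fac := ⟨n, hn, rfl⟩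

lemma dist_fac (x y : Fac) : dist x y = |(x:ℝ) - (y:ℝ)| := by
  rw [Subtype.dist_eq, Real.dist_eq]

lemma bounded_of_QI (φ : Fac → Fac) (hφ : IsQuasiIsometry φ) :
    ∃ M : ℝ, ∀ x : Fac, dist (φ x) x ≤ M := by
  obtain ⟨l, c, hl, hc, hemb, -⟩ := hφ
  have hl0 : (0:ℝ) < l := lt_of_lt_of_le one_pos hl
  have ha1 : ((Nat.factorial 1 : ℕ) : ℝ) ∈ Fac := fac_mem le_rfl
  have ha1v : ((⟨_, ha1⟩ : Fac) : ℝ) = 1 := by norm_num [Nat.factorial]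
  obtain ⟨a1, ha1def⟩ : ∃ a1 : Fac, (⟨_, ha1⟩ : Fac) = a1 := ⟨_, rfl⟩
  rw [ha1def] at ha1v
  obtain ⟨B, hBdef⟩ : ∃ B : ℝ, ((φ a1 : Fac) : ℝ) = B := ⟨_, rfl⟩
  have hB1 : 1 ≤ B := hBdef ▸ Fac.one_le _
  have hT0 : (0:ℝ) ≤ 2*l*(B+c) := mul_nonneg (by linarith) (by linarith)
  obtain ⟨N, hN⟩ := exists_nat_gt (2*l*(B+c) + 2*l + B + c + 3)
  have hN1 : 1 ≤ N := by
    rcases Nat.eq_zero_or_pos N with h | h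
    · subst h; norm_num at hN; linarith
    · exact h
  -- key: φ fixes all factorials n! with n ≥ N
  have hkey : ∀ (x : Fac) (n : ℕ), N ≤ n → (x:ℝ) = (n.factorial : ℕ) → φ x = x := by
    intro x n hn hx
    have hn1 : 1 ≤ n := le_trans hN1 hn
    have hnn : (n:ℝ) ≤ ((n.factorial : ℕ) : ℝ) := by exact_mod_cast Nat.self_le_factorial n
    have hnN : 2*l*(B+c) + 2*l + B + c + 3 < (n:ℝ) := lt_of_lt_of_le hN (by exact_mod_cast hn)
    have hnf1 : (1:ℝ) ≤ ((n.factorial : ℕ) : ℝ) := by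
      exact_mod_cast Nat.one_le_iff_ne_zero.mpr (Nat.factorial_ne_zero n)
    have hd : dist x a1 = ((n.factorial : ℕ) : ℝ) - 1 := by
      rw [dist_fac, hx, ha1v, abs_of_nonneg (by linarith)]
    obtain ⟨h1, h2⟩ := hemb x a1
    rw [hd, dist_fac, hBdef] at h1 h2
    obtain ⟨y, hydef⟩ : ∃ y : ℝ, ((φ x : Fac) : ℝ) = y := ⟨_, rfl⟩
    rw [hydef] at h1 h2
    obtain ⟨m, hm1, hym'⟩ := (φ x).2
    have hym : y = ((m.factorial : ℕ) : ℝ) := hydef ▸ hym'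
    have hy1 : 1 ≤ y := hydef ▸ Fac.one_le _
    have habs1 : y - B ≤ |y - B| := le_abs_self _
    have habs2 : |y - B| ≤ y + B := by
      rcases abs_cases (y - B) with ⟨h, -⟩ | ⟨h, -⟩ <;> linarith
    have hlo : ((n.factorial : ℕ) : ℝ) - 1 ≤ l * |y - B| + l * c := by
      have h3 : (1/l) * (((n.factorial : ℕ) : ℝ) - 1) ≤ |y - B| + c := by linarith
      have h4 : l * ((1/l) * (((n.factorial : ℕ) : ℝ) - 1)) ≤ l * (|y - B| + c) :=
        mul_le_mul_of_nonneg_left h3 hl0.le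
      have h5 : l * ((1/l) * (((n.factorial : ℕ) : ℝ) - 1)) = ((n.factorial : ℕ) : ℝ) - 1 := by
        field_simp
      linarith [h4, h5.le, h5.ge]
    have h2l : 2 * l ≤ (n:ℝ) := by linarith
    rcases lt_trichotomy m n with hmn | hmn | hmn
    · exfalso
      have hmle : m ≤ n - 1 := by omega
      have hq : ((m.factorial : ℕ) : ℝ) ≤ (((n-1).factorial : ℕ) : ℝ) := by
        exact_mod_cast Nat.factorial_le hmle
      have hq0 : (0:ℝ) < (((n-1).factorial : ℕ) : ℝ) := by exact_mod_cast (n-1).factorial_pos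
      have hfac : (n:ℝ) * (((n-1).factorial : ℕ) : ℝ) = ((n.factorial : ℕ) : ℝ) := by
        exact_mod_cast Nat.mul_factorial_pred (by omega : n ≠ 0)
      have hp1 : 2*l * (((n-1).factorial : ℕ) : ℝ) ≤ (n:ℝ) * (((n-1).factorial : ℕ) : ℝ) :=
        mul_le_mul_of_nonneg_right h2l hq0.le
      have hyq : y ≤ (((n-1).factorial : ℕ) : ℝ) := by rw [hym]; exact hq
      have hp2 : l * |y - B| ≤ l * (y + B) := mul_le_mul_of_nonneg_left habs2 hl0.le
      have hp3 : l * y ≤ l * (((n-1).factorial : ℕ) : ℝ) := mul_le_mul_of_nonneg_left hyq hl0.le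
      linarith [hp1, hp2, hp3, hlo, hnn, hnN, hfac, hl, hc, hB1]
    · refine Subtype.ext ?_
      rw [hym', hmn, hx]
    · exfalso
      have hm : n + 1 ≤ m := hmn
      have hq : (((n+1).factorial : ℕ) : ℝ) ≤ ((m.factorial : ℕ) : ℝ) := by
        exact_mod_cast Nat.factorial_le hm
      have hfs : (((n+1).factorial : ℕ) : ℝ) = ((n:ℝ)+1) * ((n.factorial : ℕ) : ℝ) := by
        push_cast [Nat.factorial_succ]; ring
      have hup : y ≤ B + (l * (((n.factorial : ℕ) : ℝ) - 1) + c) := by linarith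
      have h1n : (1:ℝ) ≤ (n:ℝ) + 1 - l := by linarith
      have hnf0 : (0:ℝ) ≤ ((n.factorial : ℕ) : ℝ) := by positivity
      have hp : 1 * ((n.factorial : ℕ) : ℝ) ≤ ((n:ℝ)+1-l) * ((n.factorial : ℕ) : ℝ) :=
        mul_le_mul_of_nonneg_right h1n hnf0
      have hyq : (((n+1).factorial : ℕ) : ℝ) ≤ y := by rw [hym]; exact hq
      linarith [hp, hup, hyq, hfs, hnn, hnN, hl, hc, hB1]
  -- assemble the bound
  have hNmem : ((N.factorial : ℕ) : ℝ) ∈ Fac := fac_mem hN1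
  obtain ⟨xN, hxNdef⟩ : ∃ xN : Fac, (⟨_, hNmem⟩ : Fac) = xN := ⟨_, rfl⟩
  have hxNv : (xN : ℝ) = ((N.factorial : ℕ) : ℝ) := by rw [← hxNdef]
  have hfix : φ xN = xN := hkey xN N le_rfl hxNv
  have hNf1 : (1:ℝ) ≤ ((N.factorial : ℕ) : ℝ) := by
    exact_mod_cast Nat.one_le_iff_ne_zero.mpr (Nat.factorial_ne_zero N)
  refine ⟨l * ((N.factorial : ℕ) : ℝ) + c + ((N.factorial : ℕ) : ℝ), ?_⟩
  intro x
  obtain ⟨n, hn1, hxv⟩ := x.2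
  by_cases hcase : N ≤ n
  · rw [hkey x n hcase hxv, dist_self]
    nlinarith [mul_le_mul_of_nonneg_left hNf1 hl0.le]
  · have hxle : (x:ℝ) ≤ ((N.factorial : ℕ) : ℝ) := by
      rw [hxv]; exact_mod_cast Nat.factorial_le (le_of_not_ge hcase)
    have hx1 : 1 ≤ (x:ℝ) := Fac.one_le x
    have hdx : dist x xN ≤ ((N.factorial : ℕ) : ℝ) := by
      rw [dist_fac, hxNv]
      rcases abs_cases ((x:ℝ) - ((N.factorial : ℕ) : ℝ)) with ⟨h, -⟩ | ⟨h, -⟩ <;> linarith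
    have hφd := (hemb x xN).2
    calc dist (φ x) x ≤ dist (φ x) (φ xN) + dist (φ xN) x := dist_triangle _ _ _
      _ = dist (φ x) (φ xN) + dist x xN := by
          rw [show dist (φ xN) x = dist x xN from by rw [hfix, dist_comm]]
      _ ≤ (l * dist x xN + c) + dist x xN := by linarith
      _ ≤ l * ((N.factorial : ℕ) : ℝ) + c + ((N.factorial : ℕ) : ℝ) := by
          have := mul_le_mul_of_nonneg_left hdx hl0.le
          linarith [dist_nonneg (x := x) (y := xN)]

/-- Every quasi-isometry of the set of factorials is at finite sup-distance
from the identity; consequently any two quasi-isometries are at finite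
sup-distance, i.e. `QI(F)` is trivial. -/
theorem stmt_14 :
    (∀ φ : Fac → Fac, IsQuasiIsometry φ →
      ∃ M : ℝ, ∀ x : Fac, dist (φ x) x ≤ M) ∧
    (∀ φ ψ : Fac → Fac, IsQuasiIsometry φ → IsQuasiIsometry ψ →
      ∃ M : ℝ, ∀ x : Fac, dist (φ x) (ψ x) ≤ M) := by
  refine ⟨bounded_of_QI, ?_⟩
  intro φ ψ hφ hψ
  obtain ⟨M1, h1⟩ := bounded_of_QI φ hφ
  obtain ⟨M2, h2⟩ := bounded_of_QI ψ hψ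
  refine ⟨M1 + M2, fun x => ?_⟩
  calc dist (φ x) (ψ x) ≤ dist (φ x) x + dist x (ψ x) := dist_triangle _ _ _
    _ = dist (φ x) x + dist (ψ x) x := by rw [dist_comm x (ψ x)]
    _ ≤ M1 + M2 := add_le_add (h1 x) (h2 x)
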